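/- Let F = F₁ × ⋯ × F_d with each F_i ⊆ [0,1] closed containing 0 and 1. If S = S₁ × ⋯ × S_d is a finite grid with S_i ⊆ F_i finite containing 0 and 1, and f : [0,1]^d → ℝ is a componentwise piecewise linear function whose knots for each coordinate i lie in S_i (i.e., f is d-affine on every cell of the grid S), then the multiaffine extension of the restriction of f to F recovers f: P_{F→[0,1]^d}(f|_F) = f on [0,1]^d. -/

import Mathlib

open Set
open scoped Classical

/-- Closest left neighbor of `t` in `B`. -/
noncomputable def leftN (B : Set ℝ) (t : ℝ) : ℝ := sSup {u ∈ B | u ≤ t}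

/-- Closest right neighbor of `t` in `B`. -/
noncomputable def rightN (B : Set ℝ) (t : ℝ) : ℝ := sInf {u ∈ B | t ≤ u}

/-- The affine extension `L_B g` of a function `g` defined on `B` to `[0,1]`. -/
noncomputable def affExt (B : Set ℝ) (g : ℝ → ℝ) (t : ℝ) : ℝ :=
  if t ∈ B then g t
  else (1 - (t - leftN B t) / (rightN B t - leftN B t)) * g (leftN B t)
    + (t - leftN B t) / (rightN B t - leftN B t) * g (rightN B t)

/-- Neighbor `t^ε` of `t` in `Fi` (with the convention `t^- = t^+ = t` for `t ∈ Fi`). -/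
noncomputable def nbr (Fi : Set ℝ) (t : ℝ) (ε : Bool) : ℝ :=
  if t ∈ Fi then t else if ε then rightN Fi t else leftN Fi t

/-- Weight `ω_ε(t)` (with the convention `ω_-(t) = ω_+(t) = 1/2` for `t ∈ Fi`). -/
noncomputable def wt (Fi : Set ℝ) (t : ℝ) (ε : Bool) : ℝ :=
  if t ∈ Fi then 1/2
  else if ε then (t - leftN Fi t) / (rightN Fi t - leftN Fi t)
  else 1 - (t - leftN Fi t) / (rightN Fi t - leftN Fi t)

/-- The multiaffine extension `P_{F → [0,1]^d}(f)`, via its explicit formula. -/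
noncomputable def multiExt {d : ℕ} (F : Fin d → Set ℝ) (f : (Fin d → ℝ) → ℝ)
    (t : Fin d → ℝ) : ℝ :=
  ∑ ε : Fin d → Bool, (∏ j, wt (F j) (t j) (ε j)) * f (fun j => nbr (F j) (t j) (ε j))

/-- The unit cube `[0,1]^d`. -/
def cube (d : ℕ) : Set (Fin d → ℝ) := Set.pi Set.univ fun _ => Set.Icc (0:ℝ) 1

lemma le_leftN {B : Set ℝ} {t x : ℝ} (hx : x ∈ B) (hxt : x ≤ t) : x ≤ leftN B t :=
  le_csSup ⟨t, fun _ hu => hu.2⟩ ⟨hx, hxt⟩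

lemma rightN_le {B : Set ℝ} {t x : ℝ} (hx : x ∈ B) (htx : t ≤ x) : rightN B t ≤ x :=
  csInf_le ⟨t, fun _ hu => hu.2⟩ ⟨hx, htx⟩

lemma leftN_mem {B : Set ℝ} {t : ℝ} (hB : IsClosed B) (h0B : (0:ℝ) ∈ B) (ht : 0 ≤ t) :
    leftN B t ∈ B ∧ leftN B t ≤ t := by
  have hcl : IsClosed {u ∈ B | u ≤ t} := hB.inter isClosed_Iic
  have h := hcl.csSup_mem ⟨0, h0B, ht⟩ ⟨t, fun _ hu => hu.2⟩
  exact ⟨h.1, h.2⟩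

lemma rightN_mem {B : Set ℝ} {t : ℝ} (hB : IsClosed B) (h1B : (1:ℝ) ∈ B) (ht : t ≤ 1) :
    rightN B t ∈ B ∧ t ≤ rightN B t := by
  have hcl : IsClosed {u ∈ B | t ≤ u} := hB.inter isClosed_Ici
  have h := hcl.csInf_mem ⟨1, h1B, ht⟩ ⟨t, fun _ hu => hu.2⟩
  exact ⟨h.1, h.2⟩

lemma wt_sum (Fi : Set ℝ) (t : ℝ) : wt Fi t true + wt Fi t false = 1 := by
  by_cases h : t ∈ Fi <;> simp [wt, h] <;> norm_num

lemma wt_nbr {Fi : Set ℝ} {t : ℝ} (hB : IsClosed Fi) (h0B : (0:ℝ) ∈ Fi) (h1B : (1:ℝ) ∈ Fi)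
    (ht : t ∈ Set.Icc (0:ℝ) 1) :
    wt Fi t true * nbr Fi t true + wt Fi t false * nbr Fi t false = t := by
  by_cases h : t ∈ Fi
  · simp [wt, nbr, h]; ring
  · have hl := leftN_mem hB h0B ht.1
    have hr := rightN_mem hB h1B ht.2
    have hlt : leftN Fi t < t := lt_of_le_of_ne hl.2 fun e => h (e ▸ hl.1)
    have htr : t < rightN Fi t := lt_of_le_of_ne hr.2 fun e => h (e ▸ hr.1)
    have hne : rightN Fi t - leftN Fi t ≠ 0 := sub_ne_zero.2 (ne_of_gt (hlt.trans htr))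
    simp only [wt, nbr, h, if_false, if_true, Bool.false_eq_true]
    field_simp
    ring

theorem stmt19 (d : ℕ) (hd : 1 ≤ d) (F : Fin d → Set ℝ)
    (hFsub : ∀ i, F i ⊆ Set.Icc (0:ℝ) 1) (hFc : ∀ i, IsClosed (F i))
    (h0 : ∀ i, (0:ℝ) ∈ F i) (h1 : ∀ i, (1:ℝ) ∈ F i)
    (S : Fin d → Set ℝ) (hSfin : ∀ i, (S i).Finite) (hSsub : ∀ i, S i ⊆ F i)
    (hS0 : ∀ i, (0:ℝ) ∈ S i) (hS1 : ∀ i, (1:ℝ) ∈ S i)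
    (f : (Fin d → ℝ) → ℝ) (hf : ContinuousOn f (cube d))
    (hcell : ∀ a b : Fin d → ℝ,
      (∀ j, a j ∈ S j) → (∀ j, b j ∈ S j) → (∀ j, a j ≤ b j) →
      (∀ j, Set.Ioo (a j) (b j) ∩ S j = ∅) →
      ∀ i : Fin d, ∀ t ∈ Set.pi Set.univ (fun j => Set.Icc (a j) (b j)),
        ∃ c e : ℝ, ∀ u ∈ Set.Icc (a i) (b i), f (Function.update t i u) = c * u + e) :
    ∀ t ∈ cube d, multiExt F f t = f t := by
  intro t ht
  have htc : ∀ j, t j ∈ Set.Icc (0:ℝ) 1 := fun j => ht j (mem_univ j)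
  set n : Fin d → Bool → ℝ := fun j ε => nbr (F j) (t j) ε with hn
  set w : Fin d → Bool → ℝ := fun j ε => wt (F j) (t j) ε with hw
  set a : Fin d → ℝ := fun j => leftN (S j) (t j) with ha
  set b : Fin d → ℝ := fun j => rightN (S j) (t j) with hb
  have haS : ∀ j, a j ∈ S j ∧ a j ≤ t j :=
    fun j => leftN_mem (hSfin j).isClosed (hS0 j) (htc j).1
  have hbS : ∀ j, b j ∈ S j ∧ t j ≤ b j :=
    fun j => rightN_mem (hSfin j).isClosed (hS1 j) (htc j).2
  have hwsum : ∀ j, w j true + w j false = 1 := fun j => wt_sum _ _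
  have hwn : ∀ j, w j true * n j true + w j false * n j false = t j :=
    fun j => wt_nbr (hFc j) (h0 j) (h1 j) (htc j)
  have hnmem : ∀ j ε, n j ε ∈ Set.Icc (a j) (b j) := by
    intro j ε
    by_cases h : t j ∈ F j
    · simp only [hn, nbr, h, if_true]
      exact ⟨(haS j).2, (hbS j).2⟩
    · have hl := leftN_mem (hFc j) (h0 j) (htc j).1
      have hr := rightN_mem (hFc j) (h1 j) (htc j).2
      have hal : a j ≤ leftN (F j) (t j) := le_leftN (hSsub j (haS j).1) (haS j).2
      have hrb : rightN (F j) (t j) ≤ b j := rightN_le (hSsub j (hbS j).1) (hbS j).2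
      cases ε
      · simp only [hn, nbr, h, if_false, Bool.false_eq_true]
        exact ⟨hal, hl.2.trans (hbS j).2⟩
      · simp only [hn, nbr, h, if_false, if_true]
        exact ⟨hal.trans (hl.2.trans hr.2), hrb⟩
  have htmem : ∀ j, t j ∈ Set.Icc (a j) (b j) := fun j => ⟨(haS j).2, (hbS j).2⟩
  have hIoo : ∀ j, Set.Ioo (a j) (b j) ∩ S j = ∅ := by
    intro j
    ext u
    simp only [mem_inter_iff, mem_Ioo, mem_empty_iff_false, iff_false, not_and]
    rintro ⟨h1u, h2u⟩ hu
    rcases le_total u (t j) with h | h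
    · exact absurd (le_leftN hu h) (not_le.2 h1u)
    · exact absurd (rightN_le hu h) (not_le.2 h2u)
  have Hcell := hcell a b (fun j => (haS j).1) (fun j => (hbS j).1)
    (fun j => (haS j).2.trans (hbS j).2) hIoo
  -- main induction
  have main : ∀ T : Finset (Fin d),
      ∑ ε : Fin d → Bool, (∏ j, w j (ε j)) * f (fun j => if j ∈ T then n j (ε j) else t j)
        = f t := by
    intro T
    induction T using Finset.induction_on with
    | empty =>
      simp only [Finset.notMem_empty, if_false]
      rw [← Finset.sum_mul]
      have hsum1 : ∑ ε : Fin d → Bool, ∏ j, w j (ε j) = 1 := by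
        rw [← Fintype.prod_sum fun j (b : Bool) => w j b]
        refine Finset.prod_eq_one fun j _ => ?_
        rw [Fintype.sum_bool]; exact hwsum j
      rw [hsum1, one_mul]
    | @insert i T hiT ih =>
      choose! c e hce using Hcell i
      set p : (Fin d → Bool) → (Fin d → ℝ) := fun ε j => if j ∈ T then n j (ε j) else t j
        with hp
      have hpbox : ∀ ε, p ε ∈ Set.pi Set.univ (fun j => Set.Icc (a j) (b j)) := by
        intro ε j _
        simp only [hp]
        split_ifs
        · exact hnmem j _
        · exact htmem j
      have hfT' : ∀ ε : Fin d → Bool,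
          f (fun j => if j ∈ insert i T then n j (ε j) else t j)
            = c (p ε) * n i (ε i) + e (p ε) := by
        intro ε
        have h1 : (fun j => if j ∈ insert i T then n j (ε j) else t j)
            = Function.update (p ε) i (n i (ε i)) := by
          funext j
          by_cases hj : j = i
          · subst hj; simp [Function.update_self, hp, hiT]
          · simp [Function.update_of_ne hj, Finset.mem_insert, hj, hp]
        rw [h1, hce (p ε) (hpbox ε) _ (hnmem i (ε i))]
      have hfT : ∀ ε : Fin d → Bool, f (p ε) = c (p ε) * t i + e (p ε) := by
        intro ε
        have hpi : p ε i = t i := by simp [hp, hiT]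
        have h1 : p ε = Function.update (p ε) i (t i) := by
          rw [← hpi, Function.update_eq_self]
        conv_lhs => rw [h1]
        rw [hce (p ε) (hpbox ε) _ (htmem i)]
      have key : ∑ ε : Fin d → Bool,
          (∏ j, w j (ε j)) * (c (p ε) * (n i (ε i) - t i)) = 0 := by
        refine Finset.sum_ninvolution (fun ε => Function.update ε i (!(ε i))) ?_ ?_
          (fun _ => Finset.mem_univ _) ?_
        · intro ε
          simp only [Function.update_self]
          have hpσ : p (Function.update ε i (!(ε i))) = p ε := by
            funext j
            simp only [hp]
            by_cases hj : j ∈ T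
            · rw [if_pos hj, if_pos hj,
                Function.update_of_ne (ne_of_mem_of_not_mem hj hiT)]
            · rw [if_neg hj, if_neg hj]
          have hprod : ∀ η : Fin d → Bool, ∏ j, w j (η j)
              = w i (η i) * ∏ j ∈ Finset.univ.erase i, w j (η j) :=
            fun η => (Finset.mul_prod_erase Finset.univ (fun j => w j (η j))
              (Finset.mem_univ i)).symm
          have hrest : ∏ j ∈ Finset.univ.erase i, w j (Function.update ε i (!(ε i)) j)
              = ∏ j ∈ Finset.univ.erase i, w j (ε j) := by
            refine Finset.prod_congr rfl fun j hj => ?_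
            rw [Function.update_of_ne (Finset.ne_of_mem_erase hj)]
          rw [hpσ, hprod ε, hprod (Function.update ε i (!(ε i))), hrest,
            Function.update_self]
          set R := ∏ j ∈ Finset.univ.erase i, w j (ε j)
          set C := c (p ε)
          cases hb : ε i
          · simp only [Bool.not_false]
            linear_combination (R * C) * hwn i - (R * C * t i) * hwsum i
          · simp only [Bool.not_true]
            linear_combination (R * C) * hwn i - (R * C * t i) * hwsum i
        · intro ε _ hcon
          have h2 := congrFun hcon i
          simp only [Function.update_self] at h2
          exact (Bool.not_ne_self (ε i)) h2
        · intro ε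
          funext j
          by_cases hj : j = i
          · subst hj; simp [Function.update_self]
          · simp [Function.update_of_ne hj]
      calc ∑ ε : Fin d → Bool,
            (∏ j, w j (ε j)) * f (fun j => if j ∈ insert i T then n j (ε j) else t j)
          = ∑ ε : Fin d → Bool,
            ((∏ j, w j (ε j)) * f (p ε)
              + (∏ j, w j (ε j)) * (c (p ε) * (n i (ε i) - t i))) := by
            refine Finset.sum_congr rfl fun ε _ => ?_
            rw [hfT' ε, hfT ε]; ring
        _ = f t := by
            rw [Finset.sum_add_distrib, key, add_zero]
            exact ih
  have := main Finset.univ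
  simp only [Finset.mem_univ, if_true] at this
  exact this
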